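/- Suppose K↑ ≠ ∅ and the measure N_mcfc̄ exists. If N ≥ N_mcfc̄ + 1, then the optimistic LLP supervisor is valid: L(G, γ^N_optm) = pr(K↑). -/

import Mathlib

open Set

/-- Prefix closure of a language. -/
def prCl {α : Type*} (L : Set (List α)) : Set (List α) := {s | ∃ t ∈ L, s <+: t}

/-- `M` is controllable w.r.t. the (prefix-closed) language `L` and uncontrollable
events `Suc`: `pr(M)·Σ_uc ∩ L ⊆ pr(M)`. -/
def ctrb {α : Type*} (M L : Set (List α)) (Suc : Set α) : Prop :=
  ∀ s ∈ prCl M, ∀ σ ∈ Suc, s ++ [σ] ∈ L → s ++ [σ] ∈ prCl M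

/-- Supremal controllable sublanguage of `K` w.r.t. `L` and `Suc`:
the union of all controllable sublanguages of `K`. -/
def supC {α : Type*} (K L : Set (List α)) (Suc : Set α) : Set (List α) :=
  ⋃₀ {M | M ⊆ K ∧ ctrb M L Suc}

/-- Post-language of `L` after `s`: `L/s = {t : st ∈ L}`. -/
def postL {α : Type*} (L : Set (List α)) (s : List α) : Set (List α) := {t | s ++ t ∈ L}

/-- Truncation of `L` to strings of length at most `N`. -/
def truncL {α : Type*} (L : Set (List α)) (N : ℕ) : Set (List α) := {t ∈ L | t.length ≤ N}

/-- Active set of `L` after `s`. -/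
def activeSet {α : Type*} (L : Set (List α)) (s : List α) : Set α := {σ | s ++ [σ] ∈ L}

/-- The closed-loop language `L(G,γ)`, defined inductively:
`ε ∈ L(G,γ)`, and `sσ ∈ L(G,γ)` iff `s ∈ L(G,γ)`, `sσ ∈ L(G)` and `σ ∈ γ(s)`. -/
inductive InLoop {α : Type*} (L : Set (List α)) (γ : List α → Set α) : List α → Prop
  | nil : InLoop L γ []
  | snoc {s : List α} {σ : α} : InLoop L γ s → (s ++ [σ]) ∈ L → σ ∈ γ s →
      InLoop L γ (s ++ [σ])

/-- The closed-loop language as a set. -/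
def loopLang {α : Type*} (L : Set (List α)) (γ : List α → Set α) : Set (List α) :=
  {s | InLoop L γ s}

/-- The `N`-step conservative LLP decision
`f^N_cons(s) = (K/s|_{N-1})^{↑/s|_N}`. -/
def fCons {α : Type*} (K L : Set (List α)) (Suc : Set α) (N : ℕ) (s : List α) :
    Set (List α) :=
  supC (truncL (postL K s) (N - 1)) (truncL (postL L s) N) Suc

/-- The `N`-step optimistic LLP decision
`f^N_optm(s) = (K/s|_N ∪ (pr(K)/s|_N \ pr(K)/s|_{N-1}))^{↑/s|_N}`. -/
def fOptm {α : Type*} (K L : Set (List α)) (Suc : Set α) (N : ℕ) (s : List α) :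
    Set (List α) :=
  supC (truncL (postL K s) N ∪
        (truncL (postL (prCl K) s) N \ truncL (postL (prCl K) s) (N - 1)))
       (truncL (postL L s) N) Suc

/-- The LLP control policy `γ(s) = pr(f(s))|_1 ∪ (Σ_uc ∩ Σ_{L(G)}(s))`,
viewed as the set of enabled events. -/
def policy {α : Type*} (f : List α → Set (List α)) (L : Set (List α)) (Suc : Set α)
    (s : List α) : Set α :=
  {σ | [σ] ∈ prCl (f s)} ∪ (Suc ∩ activeSet L s)

/-- The conservative LLP control policy `γ^N_cons`. -/
def γCons {α : Type*} (K L : Set (List α)) (Suc : Set α) (N : ℕ) : List α → Set α :=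
  policy (fCons K L Suc N) L Suc

/-- The optimistic LLP control policy `γ^N_optm`. -/
def γOptm {α : Type*} (K L : Set (List α)) (Suc : Set α) (N : ℕ) : List α → Set α :=
  policy (fOptm K L Suc N) L Suc

/-- `L_c(G)`: traces of the plant after which only controllable events are possible. -/
def LcG {α : Type*} (L : Set (List α)) (Suc : Set α) : Set (List α) :=
  {s ∈ L | ∀ σ ∈ Suc, s ++ [σ] ∉ L}

/-- `K_mc`: legal, marked, controllable traces. -/
def Kmc {α : Type*} (K L : Set (List α)) (Suc : Set α) : Set (List α) :=
  K ∩ LcG L Suc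

/-- `K_fc̄`: uncontrollably crossing traces. -/
def Kfc {α : Type*} (K L : Set (List α)) (Suc : Set α) : Set (List α) :=
  {s ∈ prCl K | ∃ σ ∈ Suc, s ++ [σ] ∈ L ∧ s ++ [σ] ∉ prCl K}

/-- The set of lengths whose greatest element (when it exists) is `N_mcfc̄`. -/
def NmcfcSet {α : Type*} (K L : Set (List α)) (Suc : Set α) : Set ℕ :=
  {n | ∃ t : List α, t.length = n ∧ ∃ s ∈ Kmc K L Suc ∪ {([] : List α)},
      s ++ t ∈ Kfc K L Suc ∧
      ∀ v : List α, v <+: t → v ≠ [] → v ≠ t → s ++ v ∉ Kfc K L Suc ∪ Kmc K L Suc}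


section LLPAux

variable {α : Type*}

lemma prCl_mono' {A B : Set (List α)} (h : A ⊆ B) : prCl A ⊆ prCl B :=
  fun _ ⟨t, ht, hp⟩ => ⟨t, h ht, hp⟩

lemma subset_prCl' {A : Set (List α)} : A ⊆ prCl A :=
  fun x hx => ⟨x, hx, List.prefix_rfl⟩

lemma prCl_down {A : Set (List α)} {x q : List α} (hx : x ∈ prCl A) (hq : q <+: x) :
    q ∈ prCl A :=
  let ⟨t, ht, hp⟩ := hx; ⟨t, ht, hq.trans hp⟩

lemma supC_subset' {K L : Set (List α)} {Suc : Set α} : supC K L Suc ⊆ K :=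
  fun _ ⟨_, ⟨hMK, _⟩, hx⟩ => hMK hx

lemma mem_supC' {K L : Set (List α)} {Suc : Set α} {M : Set (List α)} {t : List α}
    (hMK : M ⊆ K) (hc : ctrb M L Suc) (ht : t ∈ M) : t ∈ supC K L Suc :=
  ⟨M, ⟨hMK, hc⟩, ht⟩

lemma S_ctrb {K L : Set (List α)} {Suc : Set α} {x : List α} {e : α}
    (hx : x ∈ prCl (supC K L Suc)) (he : e ∈ Suc) (hL : x ++ [e] ∈ L) :
    x ++ [e] ∈ prCl (supC K L Suc) := by
  obtain ⟨m, ⟨M, hM, hmM⟩, hp⟩ := hx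
  obtain ⟨m', hm', hp'⟩ := hM.2 x ⟨m, hmM, hp⟩ e he hL
  exact ⟨m', ⟨M, hM, hm'⟩, hp'⟩

lemma Kmc_no_unc {K L : Set (List α)} {Suc : Set α} {x : List α}
    (h : x ∈ Kmc K L Suc) {e : α} (he : e ∈ Suc) : x ++ [e] ∉ L :=
  h.2.2 e he

lemma not_Kfc_of_S {K L : Set (List α)} {Suc : Set α} {x : List α}
    (hx : x ∈ prCl (supC K L Suc)) : x ∉ Kfc K L Suc := by
  rintro ⟨_, e, he, h1, h2⟩
  exact h2 (prCl_mono' supC_subset' (S_ctrb hx he h1))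

/-- Master safety lemma: a prefix-closed, controllable, relatively nonblocking
subset of `prCl K` is contained in `prCl (supC K L Suc)`. -/
lemma safeT {Lm K L : Set (List α)} {Suc : Set α}
    (hKcl : K = prCl K ∩ Lm)
    {T : Set (List α)}
    (hTp : T ⊆ prCl K)
    (hpc : ∀ x ∈ T, ∀ q, q <+: x → q ∈ T)
    (hct : ∀ x ∈ T, ∀ e ∈ Suc, x ++ [e] ∈ L → x ++ [e] ∈ T)
    (hnb : ∀ x ∈ T, ∃ m, x <+: m ∧ m ∈ Lm ∧ m ∈ T) :
    T ⊆ prCl (supC K L Suc) := by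
  have hM0K : Lm ∩ T ⊆ K := by
    intro m ⟨h1, h2⟩
    rw [hKcl]; exact ⟨hTp h2, h1⟩
  have hM0c : ctrb (Lm ∩ T) L Suc := by
    intro x hx e he hxe
    obtain ⟨m, hm, hp⟩ := hx
    have hxT : x ∈ T := hpc m hm.2 x hp
    obtain ⟨m', hp', hm'1, hm'2⟩ := hnb _ (hct x hxT e he hxe)
    exact ⟨m', ⟨hm'1, hm'2⟩, hp'⟩
  intro x hx
  obtain ⟨m, hp, h1, h2⟩ := hnb x hx
  exact ⟨m, mem_supC' hM0K hM0c ⟨h1, h2⟩, hp⟩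

lemma step3 {Lm K : Set (List α)} {Suc : Set α} {N : ℕ} (hN : 1 ≤ N)
    {L : Set (List α)} (hKm : K ⊆ Lm)
    {s : List α} {σ : α}
    (hsσ : s ++ [σ] ∈ prCl (supC K L Suc)) :
    [σ] ∈ prCl (fOptm K L Suc N s) := by
  classical
  set S := prCl (supC K L Suc) with hS
  set M : Set (List α) :=
    {t | s ++ t ∈ S ∧ t.length ≤ N ∧ (s ++ t ∈ supC K L Suc ∨ t.length = N)} with hM
  have ext : ∀ w : List α, s ++ w ∈ S → w.length ≤ N → ∃ t ∈ M, w <+: t := by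
    intro w hw hwl
    rcases eq_or_lt_of_le hwl with heq | hlt
    · exact ⟨w, ⟨hw, hwl, Or.inr heq⟩, List.prefix_rfl⟩
    · obtain ⟨m, hm, hp⟩ := hw
      obtain ⟨r, hr⟩ := hp
      by_cases hc : w.length + r.length ≤ N
      · refine ⟨w ++ r, ⟨?_, ?_, Or.inl ?_⟩, List.prefix_append _ _⟩
        · rw [← List.append_assoc, hr]; exact subset_prCl' hm
        · simpa using hc
        · rw [← List.append_assoc, hr]; exact hm
      · refine ⟨w ++ r.take (N - w.length), ⟨?_, ?_, Or.inr ?_⟩, List.prefix_append _ _⟩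
        · have hpre : s ++ (w ++ r.take (N - w.length)) <+: s ++ w ++ r := by
            rw [← List.append_assoc]
            exact (List.prefix_append_right_inj _).2 (List.take_prefix _ _)
          exact prCl_down ⟨m, hm, hr ▸ List.prefix_rfl⟩ (hr ▸ hpre)
        · simp only [List.length_append, List.length_take]
          omega
        · simp only [List.length_append, List.length_take]
          omega
  have hMA : M ⊆ truncL (postL K s) N ∪
      (truncL (postL (prCl K) s) N \ truncL (postL (prCl K) s) (N - 1)) := by
    rintro t ⟨h1, h2, h3 | h3⟩
    · exact Or.inl ⟨supC_subset' (K := K) (L := L) (Suc := Suc) h3, h2⟩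
    · refine Or.inr ⟨⟨prCl_mono' supC_subset' h1, h2⟩, ?_⟩
      rintro ⟨-, hle⟩
      omega
  have hMc : ctrb M (truncL (postL L s) N) Suc := by
    intro u hu e he hue
    obtain ⟨hl, hlen⟩ := hue
    obtain ⟨t, ht, hp⟩ := hu
    have hsu : s ++ u ∈ S := prCl_down ht.1 ((List.prefix_append_right_inj s).2 hp)
    have : s ++ (u ++ [e]) ∈ S := by
      rw [← List.append_assoc]
      exact S_ctrb hsu he (by rw [List.append_assoc]; exact hl)
    obtain ⟨t', ht', hp'⟩ := ext (u ++ [e]) this hlen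
    exact ⟨t', ht', hp'⟩
  obtain ⟨t, htM, hpre⟩ := ext [σ] hsσ (by simpa using hN)
  exact ⟨t, mem_supC' hMA hMc htM, hpre⟩


lemma step2 {Lm K : Set (List α)} {Suc : Set α} {N n0 : ℕ}
    {L : Set (List α)} (hKm : K ⊆ Lm) (hKcl : K = prCl K ∩ Lm)
    (hub : ∀ n ∈ NmcfcSet K L Suc, n ≤ n0) (hN : n0 + 1 ≤ N)
    {s : List α} (hs : s ∈ prCl (supC K L Suc)) {σ : α}
    (hσ : [σ] ∈ prCl (fOptm K L Suc N s)) :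
    s ++ [σ] ∈ prCl (supC K L Suc) := by
  classical
  set S := prCl (supC K L Suc) with hSdef
  have anti : ∀ {a b : List α}, a <+: b → b.length ≤ a.length → a = b :=
    fun h1 h2 => h1.eq_of_length (le_antisymm h1.length_le h2)
  obtain ⟨t0, ht0, hpre0⟩ := hσ
  obtain ⟨M, ⟨hMA, hMc⟩, ht0M⟩ := ht0
  have F1 : ∀ u ∈ prCl M, s ++ u ∈ prCl K ∧ u.length ≤ N := by
    intro u hu
    obtain ⟨t, ht, hp⟩ := hu
    have htK : s ++ t ∈ prCl K ∧ t.length ≤ N := by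
      rcases hMA ht with h | h
      · exact ⟨subset_prCl' h.1, h.2⟩
      · exact ⟨h.1.1, h.1.2⟩
    exact ⟨prCl_down htK.1 ((List.prefix_append_right_inj s).2 hp),
      le_trans hp.length_le htK.2⟩
  have F2 : ∀ u ∈ prCl M, u.length < N → s ++ u ∉ Kfc K L Suc := by
    rintro u hu hlen ⟨hpk, e, he, h1, h2⟩
    have hmem : u ++ [e] ∈ truncL (postL L s) N := by
      refine ⟨by show s ++ (u ++ [e]) ∈ L; rw [← List.append_assoc]; exact h1, by simp; omega⟩
    have hcl := hMc u hu e he hmem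
    have h3 := (F1 _ hcl).1
    rw [← List.append_assoc] at h3
    exact h2 h3
  set P : Set (List α) :=
    {u | u ∈ prCl M ∧ ∀ v, v <+: u → v ≠ [] → v ≠ u → s ++ v ∉ Kmc K L Suc} with hPdef
  set Aft : Set (List α) :=
    {y | y ∈ prCl K ∧ ∃ u ∈ P, u.length = N ∧ s ++ u <+: y ∧
      ∀ q, s ++ u <+: q → q <+: y → q ≠ y → q ∉ Kmc K L Suc} with hAdef
  -- the key "no crossing" lemma
  have nocross : ∀ n : ℕ, ∀ y : List α, y.length = n →
      ((∃ u ∈ P, y = s ++ u) ∨ y ∈ Aft) → y ∉ Kfc K L Suc := by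
    intro n
    induction n using Nat.strong_induction_on with
    | _ n IH =>
    intro y hyl hy hyKfc
    have hyA : y ∈ Aft := by
      rcases hy with ⟨u, huP, rfl⟩ | hy
      · have hF := F1 u huP.1
        rcases lt_or_eq_of_le hF.2 with hlt | heq
        · exact absurd hyKfc (F2 u huP.1 hlt)
        · refine ⟨hF.1, u, huP, heq, List.prefix_rfl, ?_⟩
          intro q h1 h2 h3
          exact absurd (anti h2 h1.length_le) h3
      · exact hy
    obtain ⟨hyK, u, huP, hulen, hsuy, hcond⟩ := hyA
    have hsy : s <+: y := (List.prefix_append s u).trans hsuy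
    have hylen : s.length + N ≤ y.length := by
      have h4 := hsuy.length_le
      simp only [List.length_append, hulen] at h4
      omega
    set Q : ℕ → Prop := fun j => y.take j ∈ Kmc K L Suc ∨ j = 0 with hQdef
    set j : ℕ := Nat.findGreatest Q s.length with hjdef
    have hjle : j ≤ s.length := Nat.findGreatest_le _
    have hjQ : Q j := Nat.findGreatest_spec (Nat.zero_le _) (Or.inr rfl)
    have hjy : j ≤ y.length := le_trans hjle (by omega)
    have hmem : (y.drop j).length ∈ NmcfcSet K L Suc := by
      refine ⟨y.drop j, rfl, y.take j, ?_, ?_, ?_⟩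
      · rcases hjQ with h | h
        · exact Or.inl h
        · right; simp [h]
      · rw [List.take_append_drop]; exact hyKfc
      · intro v hv hvne hvnt
        have hq_pref : y.take j ++ v <+: y := by
          conv_rhs => rw [← List.take_append_drop j y]
          exact (List.prefix_append_right_inj _).2 hv
        set q : List α := y.take j ++ v with hq
        have hqlen : q.length = j + v.length := by
          rw [hq]; simp only [List.length_append, List.length_take]; omega
        have hvpos : 0 < v.length := List.length_pos_iff.2 hvne
        have hqney : q ≠ y := by
          intro h
          apply hvnt
          apply hv.eq_of_length
          have h5 := congrArg List.length h
          rw [hqlen] at h5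
          simp only [List.length_drop]
          omega
        have hqlt : q.length < y.length :=
          lt_of_le_of_ne hq_pref.length_le (fun h => hqney (hq_pref.eq_of_length h))
        rintro (hqKfc | hqKmc)
        · by_cases hcase : q.length ≤ s.length
          · exact not_Kfc_of_S
              (prCl_down hs (List.prefix_of_prefix_length_le hq_pref hsy hcase)) hqKfc
          · push_neg at hcase
            obtain ⟨w, hw⟩ := List.prefix_of_prefix_length_le hsy hq_pref (le_of_lt hcase)
            by_cases hc2 : q.length < s.length + N
            · have hwu : w <+: u := by
                have h1 : q <+: s ++ u := List.prefix_of_prefix_length_le hq_pref hsuy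
                  (by simp only [List.length_append, hulen]; omega)
                rw [← hw] at h1
                exact (List.prefix_append_right_inj s).1 h1
              have hwlen : w.length < N := by
                have h5 := congrArg List.length hw
                simp only [List.length_append] at h5
                omega
              exact F2 w (prCl_down huP.1 hwu) hwlen (hw ▸ hqKfc)
            · push_neg at hc2
              have hsuq : s ++ u <+: q := List.prefix_of_prefix_length_le hsuy hq_pref
                (by simp only [List.length_append, hulen]; omega)
              have hqA : q ∈ Aft := by
                refine ⟨prCl_down hyK hq_pref, u, huP, hulen, hsuq, ?_⟩
                intro q' h1 h2 h3
                refine hcond q' h1 (h2.trans hq_pref) ?_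
                intro h; subst h
                exact h3 (anti hq_pref h2.length_le).symm
              exact IH q.length (by omega) q rfl (Or.inr hqA) hqKfc
        · by_cases hcase : q.length ≤ s.length
          · have hng : ¬ Q q.length := Nat.findGreatest_is_greatest (by omega) hcase
            apply hng
            left
            have h5 : q = y.take q.length := List.prefix_iff_eq_take.1 hq_pref
            rwa [← h5]
          · push_neg at hcase
            obtain ⟨w, hw⟩ := List.prefix_of_prefix_length_le hsy hq_pref (le_of_lt hcase)
            by_cases hc2 : q.length < s.length + N
            · have hwu : w <+: u := by
                have h1 : q <+: s ++ u := List.prefix_of_prefix_length_le hq_pref hsuy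
                  (by simp only [List.length_append, hulen]; omega)
                rw [← hw] at h1
                exact (List.prefix_append_right_inj s).1 h1
              have hwne : w ≠ [] := by
                intro h; subst h
                have h5 := congrArg List.length hw
                simp only [List.length_append, List.length_nil] at h5
                omega
              have hwnu : w ≠ u := by
                intro h; subst h
                have h5 := congrArg List.length hw
                simp only [List.length_append, hulen] at h5
                omega
              exact huP.2 w hwu hwne hwnu (hw ▸ hqKmc)
            · push_neg at hc2
              have hsuq : s ++ u <+: q := List.prefix_of_prefix_length_le hsuy hq_pref
                (by simp only [List.length_append, hulen]; omega)
              exact hcond q hsuq hq_pref hqney hqKmc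
    have hlendrop : (y.drop j).length = y.length - j := List.length_drop
    have hcontra := hub _ hmem
    omega
  -- prefix-closedness helpers
  have Ppc : ∀ u ∈ P, ∀ v, v <+: u → v ∈ P := by
    intro u hu v hv
    refine ⟨prCl_down hu.1 hv, ?_⟩
    intro v' h1 h2 h3
    by_cases h4 : v' = u
    · subst h4
      exact absurd (anti h1 hv.length_le) h3
    · exact hu.2 v' (h1.trans hv) h2 h4
  have midpref : ∀ u ∈ P, ∀ q, q <+: s ++ u → q ∈ S ∨ (∃ v ∈ P, q = s ++ v) := by
    intro u hu q hq
    by_cases hle : q.length ≤ s.length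
    · exact Or.inl (prCl_down hs (List.prefix_of_prefix_length_le hq (List.prefix_append s u) hle))
    · push_neg at hle
      obtain ⟨v, hv⟩ := List.prefix_of_prefix_length_le (List.prefix_append s u) hq (le_of_lt hle)
      have hvu : v <+: u := by
        rw [← hv] at hq
        exact (List.prefix_append_right_inj s).1 hq
      exact Or.inr ⟨v, Ppc u hu v hvu, hv.symm⟩
  have hTp : (S ∪ {y | ∃ u ∈ P, y = s ++ u} ∪ Aft) ⊆ prCl K := by
    rintro x ((hx | ⟨u, huP, rfl⟩) | hx)
    · exact prCl_mono' supC_subset' hx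
    · exact (F1 u huP.1).1
    · exact hx.1
  have hpc : ∀ x ∈ (S ∪ {y | ∃ u ∈ P, y = s ++ u} ∪ Aft), ∀ q, q <+: x →
      q ∈ (S ∪ {y | ∃ u ∈ P, y = s ++ u} ∪ Aft) := by
    rintro x ((hx | ⟨u, huP, rfl⟩) | hx) q hq
    · exact Or.inl (Or.inl (prCl_down hx hq))
    · rcases midpref u huP q hq with h | ⟨v, hv, rfl⟩
      · exact Or.inl (Or.inl h)
      · exact Or.inl (Or.inr ⟨v, hv, rfl⟩)
    · obtain ⟨hxK, u, huP, hulen, hsux, hcond⟩ := hx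
      by_cases hle : q.length ≤ s.length + N
      · have hq' : q <+: s ++ u := List.prefix_of_prefix_length_le hq hsux
          (by simp only [List.length_append, hulen]; omega)
        rcases midpref u huP q hq' with h | ⟨v, hv, rfl⟩
        · exact Or.inl (Or.inl h)
        · exact Or.inl (Or.inr ⟨v, hv, rfl⟩)
      · push_neg at hle
        refine Or.inr ⟨prCl_down hxK hq, u, huP, hulen,
          List.prefix_of_prefix_length_le hsux hq (by simp only [List.length_append, hulen]; omega), ?_⟩
        intro q' h1 h2 h3
        refine hcond q' h1 (h2.trans hq) ?_
        intro h; subst h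
        exact h3 (anti hq h2.length_le).symm
  have hct : ∀ x ∈ (S ∪ {y | ∃ u ∈ P, y = s ++ u} ∪ Aft), ∀ e ∈ Suc, x ++ [e] ∈ L →
      x ++ [e] ∈ (S ∪ {y | ∃ u ∈ P, y = s ++ u} ∪ Aft) := by
    have aftstep : ∀ x ∈ Aft, ∀ e ∈ Suc, x ++ [e] ∈ L → x ++ [e] ∈ Aft := by
      intro x hx e he hxe
      obtain ⟨hxK, u, huP, hulen, hsux, hcond⟩ := hx
      have hnc : x ∉ Kfc K L Suc := nocross x.length x rfl
        (Or.inr ⟨hxK, u, huP, hulen, hsux, hcond⟩)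
      have hxeK : x ++ [e] ∈ prCl K := by
        by_contra hcon
        exact hnc ⟨hxK, e, he, hxe, hcon⟩
      refine ⟨hxeK, u, huP, hulen, hsux.trans (List.prefix_append _ _), ?_⟩
      intro q h1 h2 h3
      have hqx : q <+: x := by
        have hlen : q.length ≤ x.length := by
          have h4 := h2.length_le
          simp only [List.length_append, List.length_cons, List.length_nil] at h4
          rcases eq_or_lt_of_le h4 with h5 | h5
          · exact absurd (h2.eq_of_length (by simp [h5])) h3
          · omega
        exact List.prefix_of_prefix_length_le h2 (List.prefix_append _ _) hlen
      by_cases hqx' : q = x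
      · subst hqx'
        intro hKmc
        exact Kmc_no_unc hKmc he hxe
      · exact hcond q h1 hqx hqx'
    rintro x ((hx | ⟨u, huP, rfl⟩) | hx) e he hxe
    · exact Or.inl (Or.inl (S_ctrb hx he hxe))
    · have hF := F1 u huP.1
      rcases lt_or_eq_of_le hF.2 with hlt | heq
      · have hm : u ++ [e] ∈ prCl M := hMc u huP.1 e he
          ⟨by show s ++ (u ++ [e]) ∈ L; rw [← List.append_assoc]; exact hxe,
           by simp only [List.length_append, List.length_cons, List.length_nil]; omega⟩
        have hP : u ++ [e] ∈ P := by
          refine ⟨hm, ?_⟩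
          intro v h1 h2 h3
          have hvu : v <+: u := by
            have hlen : v.length ≤ u.length := by
              have h4 := h1.length_le
              simp only [List.length_append, List.length_cons, List.length_nil] at h4
              rcases eq_or_lt_of_le h4 with h5 | h5
              · exact absurd (h1.eq_of_length (by simp [h5])) h3
              · omega
            exact List.prefix_of_prefix_length_le h1 (List.prefix_append _ _) hlen
          by_cases h5 : v = u
          · subst h5
            intro hKmc
            exact Kmc_no_unc hKmc he hxe
          · exact huP.2 v hvu h2 h5
        exact Or.inl (Or.inr ⟨u ++ [e], hP, by rw [List.append_assoc]⟩)
      · have hA : s ++ u ∈ Aft := by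
          refine ⟨hF.1, u, huP, heq, List.prefix_rfl, ?_⟩
          intro q h1 h2 h3
          exact absurd (anti h2 h1.length_le) h3
        exact Or.inr (aftstep _ hA e he hxe)
    · exact Or.inr (aftstep x hx e he hxe)
  have hnb : ∀ x ∈ (S ∪ {y | ∃ u ∈ P, y = s ++ u} ∪ Aft), ∃ m, x <+: m ∧ m ∈ Lm ∧
      m ∈ (S ∪ {y | ∃ u ∈ P, y = s ++ u} ∪ Aft) := by
    have breach : ∀ d : ℕ, ∀ y ∈ Aft, ∀ k ∈ K, y <+: k → k.length - y.length = d →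
        ∃ m, y <+: m ∧ m ∈ Lm ∧ m ∈ (S ∪ {y | ∃ u ∈ P, y = s ++ u} ∪ Aft) := by
      intro d
      induction d using Nat.strong_induction_on with
      | _ d IH =>
      intro y hyA k hk hyk hd
      by_cases h1 : y ∈ Kmc K L Suc
      · exact ⟨y, List.prefix_rfl, hKm h1.1, Or.inr hyA⟩
      by_cases h2 : y = k
      · exact ⟨y, List.prefix_rfl, hKm (h2 ▸ hk), Or.inr hyA⟩
      · have hlt : y.length < k.length :=
          lt_of_le_of_ne hyk.length_le (fun h => h2 (hyk.eq_of_length h))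
        have hy'k : k.take (y.length + 1) <+: k := List.take_prefix _ _
        have hy'len : (k.take (y.length + 1)).length = y.length + 1 := by
          simp only [List.length_take]; omega
        have hyy' : y <+: k.take (y.length + 1) :=
          List.prefix_of_prefix_length_le hyk hy'k (by omega)
        have hy'A : k.take (y.length + 1) ∈ Aft := by
          obtain ⟨hyK, u, huP, hulen, hsuy, hcond⟩ := hyA
          refine ⟨⟨k, hk, hy'k⟩, u, huP, hulen, hsuy.trans hyy', ?_⟩
          intro q hq1 hq2 hq3
          have hqy : q <+: y := by
            have hlen : q.length ≤ y.length := by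
              have h4 := hq2.length_le
              rw [hy'len] at h4
              rcases eq_or_lt_of_le h4 with h5 | h5
              · exact absurd (hq2.eq_of_length (by rw [hy'len]; exact h5)) hq3
              · omega
            exact List.prefix_of_prefix_length_le hq2 hyy' hlen
          by_cases hqy' : q = y
          · subst hqy'; exact h1
          · exact hcond q hq1 hqy hqy'
        obtain ⟨m, hm1, hm2, hm3⟩ := IH (k.length - (y.length + 1)) (by omega)
          (k.take (y.length + 1)) hy'A k hk hy'k (by rw [hy'len])
        exact ⟨m, hyy'.trans hm1, hm2, hm3⟩
    have reach : ∀ d : ℕ, ∀ u ∈ P, ∀ t ∈ M, u <+: t → t.length - u.length = d →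
        ∃ m, s ++ u <+: m ∧ m ∈ Lm ∧ m ∈ (S ∪ {y | ∃ u ∈ P, y = s ++ u} ∪ Aft) := by
      intro d
      induction d using Nat.strong_induction_on with
      | _ d IH =>
      intro u huP t htM hut hd
      by_cases h1 : s ++ u ∈ Kmc K L Suc
      · exact ⟨s ++ u, List.prefix_rfl, hKm h1.1, Or.inl (Or.inr ⟨u, huP, rfl⟩)⟩
      by_cases h2 : u = t
      · subst h2
        rcases hMA htM with h | h
        · exact ⟨s ++ u, List.prefix_rfl, hKm h.1, Or.inl (Or.inr ⟨u, huP, rfl⟩)⟩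
        · obtain ⟨⟨hmem', hle⟩, hnot⟩ := h
          have hulen : u.length = N := by
            by_contra hne
            exact hnot ⟨hmem', by omega⟩
          have hA : s ++ u ∈ Aft := ⟨hmem', u, huP, hulen, List.prefix_rfl,
            fun q hq1 hq2 hq3 => absurd (anti hq2 hq1.length_le) hq3⟩
          obtain ⟨k, hkK, hpk⟩ := (hmem' : s ++ u ∈ prCl K)
          exact breach _ _ hA k hkK hpk rfl
      · have hlt : u.length < t.length :=
          lt_of_le_of_ne hut.length_le (fun h => h2 (hut.eq_of_length h))
        have hu't : t.take (u.length + 1) <+: t := List.take_prefix _ _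
        have hu'len : (t.take (u.length + 1)).length = u.length + 1 := by
          simp only [List.length_take]; omega
        have huu' : u <+: t.take (u.length + 1) :=
          List.prefix_of_prefix_length_le hut hu't (by omega)
        have hu'P : t.take (u.length + 1) ∈ P := by
          refine ⟨⟨t, htM, hu't⟩, ?_⟩
          intro v hv1 hv2 hv3
          have hvu : v <+: u := by
            have hlen : v.length ≤ u.length := by
              have h4 := hv1.length_le
              rw [hu'len] at h4
              rcases eq_or_lt_of_le h4 with h5 | h5
              · exact absurd (hv1.eq_of_length (by rw [hu'len]; exact h5)) hv3
              · omega
            exact List.prefix_of_prefix_length_le hv1 huu' hlen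
          by_cases h5 : v = u
          · subst h5; exact h1
          · exact huP.2 v hvu hv2 h5
        obtain ⟨m, hm1, hm2, hm3⟩ := IH (t.length - (u.length + 1)) (by omega)
          (t.take (u.length + 1)) hu'P t htM hu't (by rw [hu'len])
        exact ⟨m, ((List.prefix_append_right_inj s).2 huu').trans hm1, hm2, hm3⟩
    rintro x ((hx | ⟨u, huP, rfl⟩) | hx)
    · obtain ⟨m, hm, hp⟩ := hx
      exact ⟨m, hp, hKm (supC_subset' hm), Or.inl (Or.inl (subset_prCl' hm))⟩
    · obtain ⟨t, htM, hut⟩ := huP.1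
      exact reach _ u huP t htM hut rfl
    · obtain ⟨k, hkK, hpk⟩ := hx.1
      exact breach _ x hx k hkK hpk rfl
  have hsub := safeT (Suc := Suc) (L := L) hKcl hTp hpc hct hnb
  apply hsub
  refine Or.inl (Or.inr ⟨[σ], ⟨⟨t0, ht0M, hpre0⟩, ?_⟩, rfl⟩)
  intro v hv1 hv2 hv3
  exfalso
  apply hv3
  apply hv1.eq_of_length
  have h5 := List.length_pos_iff.2 hv2
  have h4 := hv1.length_le
  simp only [List.length_cons, List.length_nil] at h4 ⊢
  omega


end LLPAux

/-- Case II, optimistic attitude. If `K↑ ≠ ∅` and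
`N ≥ N_mcfc̄ + 1`, then `L(G, γ^N_optm) = pr(K↑)`. -/
theorem optm_valid_caseII {α : Type*} [Fintype α]
    (Sc Suc : Set α) (hpart : Sc ∪ Suc = Set.univ) (hdisj : Disjoint Sc Suc)
    (LG Lm K : Set (List α)) (hLG : LG = prCl Lm)
    (hKm : K ⊆ Lm) (hKcl : K = prCl K ∩ Lm)
    (hsup : (supC K LG Suc).Nonempty)
    (N : ℕ)
    (h : ∃ n, IsGreatest (NmcfcSet K LG Suc) n ∧ n + 1 ≤ N) :
    loopLang LG (γOptm K LG Suc N) = prCl (supC K LG Suc) := by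
  obtain ⟨n0, ⟨hn0mem, hn0ub⟩, hN⟩ := h
  have hN1 : 1 ≤ N := by omega
  have hub : ∀ n ∈ NmcfcSet K LG Suc, n ≤ n0 := fun n hn => hn0ub hn
  have hSL : prCl (supC K LG Suc) ⊆ LG := by
    rw [hLG]
    exact prCl_mono' (fun x hx => hKm (supC_subset' hx))
  ext x
  simp only [loopLang, Set.mem_setOf_eq]
  constructor
  · intro hx
    induction hx with
    | nil =>
      obtain ⟨m, hm⟩ := hsup
      exact ⟨m, hm, List.nil_prefix⟩
    | snoc h1 h2 h3 IH =>
      simp only [γOptm, policy, Set.mem_union, Set.mem_setOf_eq, Set.mem_inter_iff] at h3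
      rcases h3 with h3 | ⟨h3a, _⟩
      · exact step2 hKm hKcl hub hN IH h3
      · exact S_ctrb IH h3a h2
  · intro hx
    have main : ∀ y, y ∈ prCl (supC K LG Suc) → InLoop LG (γOptm K LG Suc N) y := by
      intro y
      induction y using List.reverseRecOn with
      | nil => intro _; exact InLoop.nil
      | append_singleton z σ IH =>
        intro hz
        have hz' : z ∈ prCl (supC K LG Suc) := prCl_down hz (List.prefix_append _ _)
        have hσγ : σ ∈ γOptm K LG Suc N z := by
          simp only [γOptm, policy, Set.mem_union, Set.mem_setOf_eq]
          exact Or.inl (step3 hN1 hKm hz)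
        exact InLoop.snoc (IH hz') (hSL hz) hσγ
    exact main x hx
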